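/- Let R ⊆ S be a module-finite extension of noetherian commutative rings such that R is a unique factorization domain whose fraction field L has characteristic different from two, and assume 2 is a unit in R. Suppose S is generated as an R-algebra by two elements s₁, s₂ ∈ S satisfying monic quadratic equations s₁² − a·s₁ + b = 0 and s₂² − c·s₂ + d = 0 for some a, b, c, d ∈ R. Then the extension R ⊆ S splits. -/

import Mathlib

open Module IntermediateField Polynomial

/-! ### Auxiliary residue-field construction

We hide the quotient by a maximal ideal behind a `def` to avoid instance diamonds
(the pattern used for `AlgebraicClosure` in Mathlib). -/

noncomputable def auxM (T : Type) [CommRing T] (h : Nontrivial T) : Ideal T :=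
  haveI := h; (Ideal.exists_maximal T).choose

theorem auxM_isMaximal (T : Type) [CommRing T] (h : Nontrivial T) : (auxM T h).IsMaximal :=
  haveI := h; (Ideal.exists_maximal T).choose_spec

def AuxK (T : Type) [CommRing T] (h : Nontrivial T) : Type := T ⧸ auxM T h

noncomputable def auxKField (T : Type) [CommRing T] (h : Nontrivial T) : Field (AuxK T h) :=
  haveI := auxM_isMaximal T h
  Ideal.Quotient.field (auxM T h)

noncomputable def auxKAlgebra (L T : Type) [CommSemiring L] [CommRing T] [Algebra L T]
    (h : Nontrivial T) :
    letI := auxKField T h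
    Algebra L (AuxK T h) :=
  Ideal.Quotient.algebra L

noncomputable def auxKHom (L T : Type) [CommSemiring L] [CommRing T] [Algebra L T]
    (h : Nontrivial T) :
    letI := auxKField T h
    letI := auxKAlgebra L T h
    T →ₐ[L] AuxK T h :=
  Ideal.Quotient.mkₐ L (auxM T h)

theorem auxKHom_surjective (L T : Type) [CommSemiring L] [CommRing T] [Algebra L T]
    (h : Nontrivial T) :
    letI := auxKField T h
    letI := auxKAlgebra L T h
    Function.Surjective (auxKHom L T h) :=
  Ideal.Quotient.mkₐ_surjective L (auxM T h)

theorem auxKHom_algebraMap (L T : Type) [CommSemiring L] [CommRing T] [Algebra L T]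
    (h : Nontrivial T) :
    letI := auxKField T h
    letI := auxKAlgebra L T h
    ∀ x : L, algebraMap L (AuxK T h) x = auxKHom L T h (algebraMap L T x) := by
  intro x
  exact ((Ideal.Quotient.mkₐ L (auxM T h)).commutes x).symm

/-- A finite field extension generated by two elements whose squares lie in the base
field has degree dividing `4`. -/
theorem degA {L K : Type} [Field L] [Field K] [Algebra L K] [FiniteDimensional L K]
    (τ₁ τ₂ : K) (e₁ e₂ : L) (he₁ : τ₁ ^ 2 = algebraMap L K e₁)
    (he₂ : τ₂ ^ 2 = algebraMap L K e₂)
    (hgen : IntermediateField.adjoin L {τ₁, τ₂} = ⊤) :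
    finrank L K ∣ 4 := by
  have hdeg : ∀ (M : Type) [Field M] [Algebra L M] [Algebra M K] [IsScalarTower L M K]
      (τ : K) (e : L), IsIntegral M τ → τ ^ 2 = algebraMap L K e →
      (minpoly M τ).natDegree ∣ 2 := by
    intro M _ _ _ _ τ e hint he
    have hdvd : minpoly M τ ∣ X ^ 2 - C (algebraMap L M e) := by
      apply minpoly.dvd
      rw [map_sub, map_pow, aeval_X, aeval_C, he, ← IsScalarTower.algebraMap_apply, sub_self]
    have hne : (X ^ 2 - C (algebraMap L M e) : M[X]) ≠ 0 := by
      intro h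
      have := congrArg natDegree h
      rw [natDegree_X_pow_sub_C, natDegree_zero] at this
      omega
    have hle : (minpoly M τ).natDegree ≤ 2 := by
      have := Polynomial.natDegree_le_of_dvd hdvd hne
      rwa [natDegree_X_pow_sub_C] at this
    have hpos : 0 < (minpoly M τ).natDegree := minpoly.natDegree_pos hint
    interval_cases h : (minpoly M τ).natDegree <;> decide
  set M := L⟮τ₁⟯ with hM
  have h1 : finrank L M ∣ 2 := by
    rw [IntermediateField.adjoin.finrank (Algebra.IsIntegral.isIntegral τ₁)]
    exact hdeg L τ₁ e₁ (Algebra.IsIntegral.isIntegral τ₁) he₁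
  have htop : IntermediateField.adjoin M {τ₂} = ⊤ := by
    apply IntermediateField.restrictScalars_injective L
    rw [IntermediateField.restrictScalars_top, IntermediateField.adjoin_adjoin_left, ← hgen]
    rw [Set.singleton_union, Set.pair_comm]
  have h2 : finrank M K ∣ 2 := by
    have := IntermediateField.adjoin.finrank
      (K := M) ((Algebra.IsIntegral.isIntegral (R := L) τ₂).tower_top)
    rw [htop, IntermediateField.finrank_top'] at this
    rw [this]
    exact hdeg M τ₂ e₂ ((Algebra.IsIntegral.isIntegral (R := L) τ₂).tower_top)
      (by rw [he₂, IsScalarTower.algebraMap_apply L M K])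
  have := Module.finrank_mul_finrank L M K
  calc finrank L K = finrank L M * finrank M K := this.symm
    _ ∣ 2 * 2 := mul_dvd_mul h1 h2

/-- A normalized-trace splitting: if `S` maps `R`-algebraically to a finite field
extension `K` of the fraction field `L` of an integrally closed domain `R`, and the
degree `[K : L]` is a unit in `R`, then `R → S` splits. -/
theorem auxSplit {R S L K : Type} [CommRing R] [IsDomain R] [IsIntegrallyClosed R]
    [CommRing S] [Algebra R S] [Module.Finite R S]
    [Field L] [Algebra R L] [IsFractionRing R L]
    [Field K] [Algebra L K] [Algebra R K] [IsScalarTower R L K] [FiniteDimensional L K]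
    (π : S →ₐ[R] K) (hu : IsUnit ((finrank L K : R))) :
    ∃ ρ : S →ₗ[R] R, ρ 1 = 1 := by
  classical
  obtain ⟨v, hv⟩ := hu
  have key : ∀ s : S, ∃ r : R,
      algebraMap R L r = algebraMap R L ↑v⁻¹ * Algebra.trace L K (π s) := by
    intro s
    have hint : IsIntegral R (π s) := ((Algebra.IsIntegral.of_finite R S).isIntegral s).map π
    have htr : IsIntegral R (Algebra.trace L K (π s)) := Algebra.isIntegral_trace hint
    exact IsIntegrallyClosed.isIntegral_iff.mp
      ((isIntegral_algebraMap : IsIntegral R (algebraMap R L ↑v⁻¹)).mul htr)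
  set f : S → R := fun s => (key s).choose with hfdef
  have hf : ∀ s : S, algebraMap R L (f s) = algebraMap R L ↑v⁻¹ * Algebra.trace L K (π s) :=
    fun s => (key s).choose_spec
  refine ⟨{ toFun := f, map_add' := ?_, map_smul' := ?_ }, ?_⟩
  · intro x y
    apply IsFractionRing.injective R L
    rw [map_add, hf, hf, hf, map_add, map_add, mul_add]
  · intro r x
    apply IsFractionRing.injective R L
    show algebraMap R L (f (r • x)) = algebraMap R L (r • f x)
    rw [smul_eq_mul, map_mul, hf, hf]
    have : π (r • x) = algebraMap L K (algebraMap R L r) * π x := by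
      rw [Algebra.smul_def, map_mul, AlgHom.commutes, IsScalarTower.algebraMap_apply R L K]
    rw [this, ← Algebra.smul_def ((algebraMap R L) r) (π x), map_smul, smul_eq_mul]
    ring
  · apply IsFractionRing.injective R L
    show algebraMap R L (f 1) = algebraMap R L 1
    rw [hf, map_one]
    have hone : (1 : K) = algebraMap L K 1 := (map_one _).symm
    rw [hone, Algebra.trace_algebraMap, nsmul_eq_mul, mul_one]
    have h1 : ((finrank L K : L)) = algebraMap R L ((finrank L K : R)) := by
      rw [map_natCast]
    rw [h1, ← map_mul, ← hv]
    norm_num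

set_option maxHeartbeats 1000000 in
set_option synthInstance.maxHeartbeats 400000 in
/-- Construction of the residue field of the generic fibre: a finite field extension
`K` of `L = Frac R` receiving `S`, of degree dividing `4`. -/
theorem auxField {R S : Type} [CommRing R] [IsDomain R] [CommRing S] [Algebra R S]
    [Module.Finite R S] (hinj : Function.Injective (algebraMap R S))
    (t₁ t₂ : S) (e₁ e₂ : R)
    (h1 : t₁ ^ 2 = algebraMap R S e₁) (h2 : t₂ ^ 2 = algebraMap R S e₂)
    (hgen : Algebra.adjoin R {t₁, t₂} = ⊤) :
    ∃ (K : Type) (_ : Field K) (_ : Algebra (FractionRing R) K) (_ : Algebra R K)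
      (_ : IsScalarTower R (FractionRing R) K)
      (_ : FiniteDimensional (FractionRing R) K)
      (π : S →ₐ[R] K), Module.finrank (FractionRing R) K ∣ 4 := by
  classical
  -- nontriviality of the base change
  have hT : Nontrivial (TensorProduct R (FractionRing R) S) := by
    have hinj' : Function.Injective
        (LinearMap.lTensor (FractionRing R) (Algebra.linearMap R S)) :=
      Module.Flat.lTensor_preserves_injective_linearMap _ hinj
    have h10 : ((1 : FractionRing R) ⊗ₜ[R] (1 : R) :
        TensorProduct R (FractionRing R) R) ≠ 0 := by
      intro h
      have h2 := congrArg (TensorProduct.rid R (FractionRing R)).toLinearMap h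
      rw [map_zero] at h2
      rw [show ((TensorProduct.rid R (FractionRing R)).toLinearMap
        ((1 : FractionRing R) ⊗ₜ[R] (1 : R))) = (1 : FractionRing R) by simp] at h2
      exact one_ne_zero h2
    refine ⟨(1 : FractionRing R) ⊗ₜ[R] (1 : S), 0, fun h => h10 (hinj' ?_)⟩
    rw [map_zero, LinearMap.lTensor_tmul]
    simpa using h
  letI instF : Field (AuxK (TensorProduct R (FractionRing R) S) hT) :=
    auxKField _ hT
  letI instAL : Algebra (FractionRing R) (AuxK (TensorProduct R (FractionRing R) S) hT) :=
    auxKAlgebra (FractionRing R) _ hT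
  letI instAR : Algebra R (AuxK (TensorProduct R (FractionRing R) S) hT) :=
    auxKAlgebra R _ hT
  haveI instTow : IsScalarTower R (FractionRing R)
      (AuxK (TensorProduct R (FractionRing R) S) hT) := by
    refine IsScalarTower.of_algebraMap_eq fun x => ?_
    rw [auxKHom_algebraMap R _ hT x, auxKHom_algebraMap (FractionRing R) _ hT,
      IsScalarTower.algebraMap_apply R (FractionRing R) (TensorProduct R (FractionRing R) S)]
    rfl
  haveI instFD : FiniteDimensional (FractionRing R)
      (AuxK (TensorProduct R (FractionRing R) S) hT) :=
    Module.Finite.of_surjective (auxKHom (FractionRing R) _ hT).toLinearMap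
      (auxKHom_surjective (FractionRing R) _ hT)
  set π : S →ₐ[R] AuxK (TensorProduct R (FractionRing R) S) hT :=
    ((auxKHom (FractionRing R) _ hT).restrictScalars R).comp
      (Algebra.TensorProduct.includeRight) with hπdef
  refine ⟨AuxK (TensorProduct R (FractionRing R) S) hT, instF, instAL, instAR,
    instTow, instFD, π, ?_⟩
  -- degree bound
  have hτ₁ : (π t₁) ^ 2 = algebraMap (FractionRing R)
      (AuxK (TensorProduct R (FractionRing R) S) hT) (algebraMap R (FractionRing R) e₁) := by
    rw [← IsScalarTower.algebraMap_apply, ← map_pow, h1, AlgHom.commutes]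
  have hτ₂ : (π t₂) ^ 2 = algebraMap (FractionRing R)
      (AuxK (TensorProduct R (FractionRing R) S) hT) (algebraMap R (FractionRing R) e₂) := by
    rw [← IsScalarTower.algebraMap_apply, ← map_pow, h2, AlgHom.commutes]
  have hadjT : ∀ z : TensorProduct R (FractionRing R) S,
      z ∈ Algebra.adjoin (FractionRing R)
        {(1 : FractionRing R) ⊗ₜ[R] t₁, (1 : FractionRing R) ⊗ₜ[R] t₂} := by
    intro z
    induction z using TensorProduct.induction_on with
    | zero => exact zero_mem _
    | tmul l s =>
      have hmem : s ∈ Algebra.adjoin R {t₁, t₂} := by rw [hgen]; trivial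
      have hs : (1 : FractionRing R) ⊗ₜ[R] s ∈ Algebra.adjoin (FractionRing R)
          {(1 : FractionRing R) ⊗ₜ[R] t₁, (1 : FractionRing R) ⊗ₜ[R] t₂} := by
        induction hmem using Algebra.adjoin_induction with
        | mem x hx =>
          rcases hx with rfl | hx
          · exact Algebra.subset_adjoin (Set.mem_insert _ _)
          · rcases hx with rfl
            exact Algebra.subset_adjoin (Set.mem_insert_of_mem _ rfl)
        | algebraMap r =>
          have he : (1 : FractionRing R) ⊗ₜ[R] (algebraMap R S r) =
              algebraMap (FractionRing R) (TensorProduct R (FractionRing R) S)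
                (algebraMap R (FractionRing R) r) := by
            rw [← IsScalarTower.algebraMap_apply]
            exact Algebra.TensorProduct.includeRight.commutes r
          rw [he]
          exact Subalgebra.algebraMap_mem _ _
        | add x y hx hy ihx ihy =>
          rw [TensorProduct.tmul_add]
          exact add_mem ihx ihy
        | mul x y hx hy ihx ihy =>
          have hxy : (1 : FractionRing R) ⊗ₜ[R] (x * y) =
              ((1 : FractionRing R) ⊗ₜ[R] x) * ((1 : FractionRing R) ⊗ₜ[R] y) := by
            rw [Algebra.TensorProduct.tmul_mul_tmul, mul_one]
          rw [hxy]
          exact mul_mem ihx ihy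
      have heq : l ⊗ₜ[R] s = l • ((1 : FractionRing R) ⊗ₜ[R] s :
          TensorProduct R (FractionRing R) S) := by
        rw [TensorProduct.smul_tmul', smul_eq_mul, mul_one]
      rw [heq]
      exact Subalgebra.smul_mem _ hs l
    | add x y hx hy => exact add_mem hx hy
  have hadjK : Algebra.adjoin (FractionRing R) {π t₁, π t₂} =
      (⊤ : Subalgebra (FractionRing R) (AuxK (TensorProduct R (FractionRing R) S) hT)) := by
    have hsurj : Function.Surjective (auxKHom (FractionRing R) _ hT) :=
      auxKHom_surjective (FractionRing R) _ hT
    have hmap := AlgHom.map_adjoin (auxKHom (FractionRing R) _ hT)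
      {(1 : FractionRing R) ⊗ₜ[R] t₁, (1 : FractionRing R) ⊗ₜ[R] t₂}
    have htop : Algebra.adjoin (FractionRing R)
        {(1 : FractionRing R) ⊗ₜ[R] t₁, (1 : FractionRing R) ⊗ₜ[R] t₂} =
        (⊤ : Subalgebra (FractionRing R) (TensorProduct R (FractionRing R) S)) :=
      top_le_iff.mp fun z _ => hadjT z
    rw [htop] at hmap
    have he1 : π t₁ = auxKHom (FractionRing R) _ hT ((1 : FractionRing R) ⊗ₜ[R] t₁) := rfl
    have he2 : π t₂ = auxKHom (FractionRing R) _ hT ((1 : FractionRing R) ⊗ₜ[R] t₂) := rfl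
    rw [he1, he2, ← Set.image_pair, ← hmap, Algebra.map_top]
    exact (AlgHom.range_eq_top _).mpr hsurj
  haveI : Algebra.IsAlgebraic (FractionRing R) (AuxK (TensorProduct R (FractionRing R) S) hT) :=
    Algebra.IsAlgebraic.of_finite _ _
  have hadjK' : IntermediateField.adjoin (FractionRing R) {π t₁, π t₂} = ⊤ := by
    apply IntermediateField.toSubalgebra_injective
    rw [IntermediateField.adjoin_toSubalgebra_of_isAlgebraic
      (fun x _ => Algebra.IsAlgebraic.isAlgebraic x), hadjK, IntermediateField.top_toSubalgebra]
  exact degA (π t₁) (π t₂) _ _ hτ₁ hτ₂ hadjK'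

set_option maxHeartbeats 1000000 in
/-- **DSC for quadratic bi-generated extensions when 2 is a unit.**  Let `R ⊆ S` be a
module-finite extension of noetherian rings with `R` a UFD whose fraction field has
characteristic `≠ 2`, and assume `2` is a unit in `R`.  If `S` is generated as an
`R`-algebra by two elements `s₁, s₂` satisfying monic quadratic equations
`s₁² − a·s₁ + b = 0` and `s₂² − c·s₂ + d = 0` with `a, b, c, d ∈ R`, then `R ⊆ S`
splits as a map of `R`-modules. -/
theorem stmt6 (R S : Type) [CommRing R] [IsDomain R] [UniqueFactorizationMonoid R]
    [IsNoetherianRing R] [CommRing S] [IsNoetherianRing S]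
    [Algebra R S] (hinj : Function.Injective (algebraMap R S))
    [Module.Finite R S]
    (hchar : ringChar (FractionRing R) ≠ 2)
    (h2 : IsUnit (2 : R))
    (s₁ s₂ : S) (hgen : Algebra.adjoin R {s₁, s₂} = ⊤)
    (a b c d : R)
    (h₁ : s₁ ^ 2 - algebraMap R S a * s₁ + algebraMap R S b = 0)
    (h₂ : s₂ ^ 2 - algebraMap R S c * s₂ + algebraMap R S d = 0) :
    ∃ ρ : S →ₗ[R] R, ρ 1 = 1 := by
  classical
  obtain ⟨u, hu⟩ := id h2
  have hw : 2 * (↑u⁻¹ : R) = 1 := by rw [← hu]; exact u.mul_inv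
  set w : R := (↑u⁻¹ : R) with hwdef
  have h2S : (2 : S) * algebraMap R S w = 1 := by
    rw [← map_ofNat (algebraMap R S) 2, ← map_mul, hw, map_one]
  obtain ⟨t₁, ht₁d⟩ : ∃ t : S, t = s₁ - algebraMap R S (w * a) := ⟨_, rfl⟩
  obtain ⟨t₂, ht₂d⟩ : ∃ t : S, t = s₂ - algebraMap R S (w * c) := ⟨_, rfl⟩
  have ht₁ : t₁ ^ 2 = algebraMap R S (w * a * (w * a) - b) := by
    rw [ht₁d]
    simp only [map_sub, map_mul]
    linear_combination h₁ - algebraMap R S a * s₁ * h2S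
  have ht₂ : t₂ ^ 2 = algebraMap R S (w * c * (w * c) - d) := by
    rw [ht₂d]
    simp only [map_sub, map_mul]
    linear_combination h₂ - algebraMap R S c * s₂ * h2S
  have hgen' : Algebra.adjoin R {t₁, t₂} = ⊤ := by
    rw [eq_top_iff, ← hgen]
    apply Algebra.adjoin_le
    rintro x (rfl | rfl)
    · have hx : x = t₁ + algebraMap R S (w * a) := by rw [ht₁d]; ring
      rw [hx]
      exact add_mem (Algebra.subset_adjoin (by simp)) (Subalgebra.algebraMap_mem _ _)
    · have hx : x = t₂ + algebraMap R S (w * c) := by rw [ht₂d]; ring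
      rw [hx]
      exact add_mem (Algebra.subset_adjoin (by simp)) (Subalgebra.algebraMap_mem _ _)
  obtain ⟨K, iF, iAL, iAR, iTow, iFD, π, hdeg⟩ :=
    auxField hinj t₁ t₂ _ _ ht₁ ht₂ hgen'
  letI := iF; letI := iAL; letI := iAR; haveI := iTow; haveI := iFD
  haveI : IsIntegrallyClosed R := inferInstance
  apply auxSplit (L := FractionRing R) π
  obtain ⟨k, hk⟩ := hdeg
  have h4 : IsUnit ((4 : ℕ) : R) := by
    have : ((4 : ℕ) : R) = 2 * 2 := by norm_num
    rw [this]
    exact h2.mul h2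
  refine isUnit_of_mul_isUnit_left (y := (k : R)) ?_
  rw [← Nat.cast_mul, ← hk]
  exact h4
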